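/- arXiv:1402.0818 — 4 statements merged into one kernel-verified Lean document; each statement's English description precedes it below -/
import Mathlib

section
/- Let X be a Banach space and x, y ∈ S_X with ‖x + y‖ ≤ 1 + ε and ‖x − y‖ ≤ 1 + ε for some ε > 0. Then for all scalars α, β one has (1 − ε)·max(|α|,|β|) ≤ ‖αx + βy‖ ≤ (1 + ε)·max(|α|,|β|). -/
private lemma abs_identity (α β : ℝ) : |α + β| + |α - β| = 2 * max |α| |β| := by
  rcases abs_cases (α+β) with ⟨h1,_⟩|⟨h1,_⟩ <;>
  rcases abs_cases (α-β) with ⟨h2,_⟩|⟨h2,_⟩ <;>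
  rcases abs_cases α with ⟨h3,_⟩|⟨h3,_⟩ <;>
  rcases abs_cases β with ⟨h4,_⟩|⟨h4,_⟩ <;>
  rcases max_cases |α| |β| with ⟨h5,_⟩|⟨h5,_⟩ <;>
  linarith

private lemma upper (X : Type*) [NormedAddCommGroup X] [NormedSpace ℝ X]
    (x y : X) (ε : ℝ) (hε : 0 < ε)
    (hplus : ‖x + y‖ ≤ 1 + ε) (hminus : ‖x - y‖ ≤ 1 + ε) (α β : ℝ) :
    ‖α • x + β • y‖ ≤ (1 + ε) * max |α| |β| := by
  have hd : α • x + β • y = ((α+β)/2) • (x+y) + ((α-β)/2) • (x-y) := by module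
  rw [hd]
  calc ‖((α+β)/2) • (x+y) + ((α-β)/2) • (x-y)‖
      ≤ ‖((α+β)/2) • (x+y)‖ + ‖((α-β)/2) • (x-y)‖ := norm_add_le _ _
    _ = |(α+β)/2| * ‖x+y‖ + |(α-β)/2| * ‖x-y‖ := by
        rw [norm_smul, norm_smul, Real.norm_eq_abs, Real.norm_eq_abs]
    _ ≤ |(α+β)/2| * (1+ε) + |(α-β)/2| * (1+ε) := by
        gcongr
    _ = (1 + ε) * max |α| |β| := by
        rw [abs_div, abs_div]
        have := abs_identity α β
        simp only [abs_two] at *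
        nlinarith

theorem stmt_0 (X : Type*) [NormedAddCommGroup X] [NormedSpace ℝ X] [CompleteSpace X]
    (x y : X) (hx : ‖x‖ = 1) (hy : ‖y‖ = 1) (ε : ℝ) (hε : 0 < ε)
    (hplus : ‖x + y‖ ≤ 1 + ε) (hminus : ‖x - y‖ ≤ 1 + ε) (α β : ℝ) :
    (1 - ε) * max |α| |β| ≤ ‖α • x + β • y‖ ∧
      ‖α • x + β • y‖ ≤ (1 + ε) * max |α| |β| := by
  refine ⟨?_, upper X x y ε hε hplus hminus α β⟩
  have hub : ‖α • x + (-β) • y‖ ≤ (1 + ε) * max |α| |β| := by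
    have := upper X x y ε hε hplus hminus α (-β)
    simpa using this
  have hub' : ‖β • y + (-α) • x‖ ≤ (1 + ε) * max |α| |β| := by
    have h := upper X x y ε hε hplus hminus (-α) β
    have : (-α) • x + β • y = β • y + (-α) • x := by abel
    rw [this] at h
    simpa [max_comm] using h
  rcases le_total |β| |α| with h | h
  · have key : ‖(2*α) • x‖ ≤ ‖α • x + β • y‖ + ‖α • x + (-β) • y‖ := by
      have : (2*α) • x = (α • x + β • y) + (α • x + (-β) • y) := by module
      rw [this]; exact norm_add_le _ _
    rw [norm_smul, Real.norm_eq_abs, hx, abs_mul, abs_two, mul_one] at key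
    rw [max_eq_left h] at *
    linarith
  · have key : ‖(2*β) • y‖ ≤ ‖α • x + β • y‖ + ‖β • y + (-α) • x‖ := by
      have : (2*β) • y = (α • x + β • y) + (β • y + (-α) • x) := by module
      rw [this]; exact norm_add_le _ _
    rw [norm_smul, Real.norm_eq_abs, hy, abs_mul, abs_two, mul_one] at key
    rw [max_eq_right h] at *
    linarith
end

section
/- A Banach space X is almost square (ASQ) if and only if for every finite subset x_1,…,x_N ∈ S_X and every ε > 0 there exists y ∈ S_X such that ‖x_i − y‖ ≤ 1 + ε for all i = 1,…,N. -/
open Filter Topology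

/-- A Banach space is almost square (ASQ): for every finite set of unit vectors
there is a sequence `(y n)` in the unit ball with `‖x ± y n‖ → 1` for every `x`
in the finite set, and `‖y n‖ → 1`. -/
def IsASQ (X : Type*) [NormedAddCommGroup X] [NormedSpace ℝ X] : Prop :=
  ∀ S : Finset X, (∀ x ∈ S, ‖x‖ = 1) → ∃ y : ℕ → X, (∀ n, ‖y n‖ ≤ 1) ∧
    (∀ x ∈ S, Tendsto (fun n => ‖x + y n‖) atTop (𝓝 1) ∧
      Tendsto (fun n => ‖x - y n‖) atTop (𝓝 1)) ∧
    Tendsto (fun n => ‖y n‖) atTop (𝓝 1)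

theorem stmt_3 (X : Type*) [NormedAddCommGroup X] [NormedSpace ℝ X] [CompleteSpace X] :
    IsASQ X ↔ ∀ S : Finset X, (∀ x ∈ S, ‖x‖ = 1) → ∀ ε : ℝ, 0 < ε →
      ∃ y : X, ‖y‖ = 1 ∧ ∀ x ∈ S, ‖x - y‖ ≤ 1 + ε := by
  constructor
  · intro h S hS ε hε
    obtain ⟨y, hb, hxs, hn⟩ := h S hS
    have h1 : ∀ᶠ n in atTop, 1 - ε / 2 < ‖y n‖ :=
      hn.eventually (eventually_gt_nhds (by linarith))
    have h2 : ∀ᶠ n in atTop, (1 : ℝ) / 2 < ‖y n‖ :=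
      hn.eventually (eventually_gt_nhds (by norm_num))
    have h3 : ∀ᶠ n in atTop, ∀ x ∈ S, ‖x - y n‖ < 1 + ε / 2 := by
      rw [eventually_all_finset]
      intro x hx
      exact (hxs x hx).2.eventually (eventually_lt_nhds (by linarith))
    obtain ⟨n, hn1, hn2, hn3⟩ := (h1.and (h2.and h3)).exists
    have hr : (0 : ℝ) < ‖y n‖ := by linarith
    refine ⟨‖y n‖⁻¹ • y n, ?_, ?_⟩
    · rw [norm_smul, Real.norm_eq_abs, abs_inv, abs_of_pos hr,
        inv_mul_cancel₀ hr.ne']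
    · intro x hx
      have hdist : ‖y n - ‖y n‖⁻¹ • y n‖ = 1 - ‖y n‖ := by
        have : y n - ‖y n‖⁻¹ • y n = (1 - ‖y n‖⁻¹) • y n := by
          rw [sub_smul, one_smul]
        rw [this, norm_smul, Real.norm_eq_abs]
        rw [abs_sub_comm, abs_of_nonneg (by
          have : (1:ℝ) ≤ ‖y n‖⁻¹ := (one_le_inv_iff₀).mpr ⟨hr, hb n⟩
          linarith)]
        field_simp
      calc ‖x - ‖y n‖⁻¹ • y n‖ ≤ ‖x - y n‖ + ‖y n - ‖y n‖⁻¹ • y n‖ := by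
            have := norm_sub_le_norm_sub_add_norm_sub x (y n) (‖y n‖⁻¹ • y n)
            exact this
        _ ≤ (1 + ε / 2) + (1 - ‖y n‖) := by
            rw [hdist]; exact add_le_add (le_of_lt (hn3 x hx)) le_rfl
        _ ≤ 1 + ε := by linarith
  · intro h S hS
    classical
    set T : Finset X := S ∪ S.image (fun x => -x) with hT
    have hT1 : ∀ x ∈ T, ‖x‖ = 1 := by
      intro x hx
      rcases Finset.mem_union.mp hx with hx | hx
      · exact hS x hx
      · obtain ⟨z, hz, rfl⟩ := Finset.mem_image.mp hx
        rw [norm_neg]; exact hS z hz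
    have key : ∀ n : ℕ, ∃ y : X, ‖y‖ = 1 ∧ ∀ x ∈ T, ‖x - y‖ ≤ 1 + 1 / (n + 1) := by
      intro n
      exact h T hT1 (1 / (n + 1)) (by positivity)
    choose y hy1 hy2 using key
    have hlim : Tendsto (fun n : ℕ => 1 + 1 / (n + 1 : ℝ)) atTop (𝓝 1) := by
      have := tendsto_one_div_add_atTop_nhds_zero_nat (𝕜 := ℝ)
      simpa using (tendsto_const_nhds (x := (1:ℝ)) (f := atTop)).add this
    have hlim' : Tendsto (fun n : ℕ => 1 - 1 / (n + 1 : ℝ)) atTop (𝓝 1) := by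
      have := tendsto_one_div_add_atTop_nhds_zero_nat (𝕜 := ℝ)
      simpa using (tendsto_const_nhds (x := (1:ℝ)) (f := atTop)).sub this
    refine ⟨y, fun n => (hy1 n).le, ?_, by simp [hy1]⟩
    intro x hx
    have hxT : x ∈ T := Finset.mem_union_left _ hx
    have hnxT : -x ∈ T := Finset.mem_union_right _ (Finset.mem_image_of_mem _ hx)
    have hub : ∀ n, ‖x - y n‖ ≤ 1 + 1 / (n + 1 : ℝ) := fun n => hy2 n x hxT
    have hub' : ∀ n, ‖x + y n‖ ≤ 1 + 1 / (n + 1 : ℝ) := by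
      intro n
      have := hy2 n (-x) hnxT
      calc ‖x + y n‖ = ‖-x - y n‖ := by rw [show x + y n = -(-x - y n) by abel, norm_neg]
        _ ≤ 1 + 1 / (n + 1 : ℝ) := this
    have hlb : ∀ n : ℕ, 1 - 1 / (n + 1 : ℝ) ≤ ‖x - y n‖ := by
      intro n
      have h2 : (2 : ℝ) = ‖(x + y n) - (x - y n)‖ := by
        have : (x + y n) - (x - y n) = (2 : ℝ) • y n := by
          rw [two_smul]; abel
        rw [this, norm_smul, hy1 n]; norm_num
      have := norm_sub_le (x + y n) (x - y n)
      have := hub' n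
      linarith [h2 ▸ norm_sub_le (x + y n) (x - y n)]
    have hlb' : ∀ n : ℕ, 1 - 1 / (n + 1 : ℝ) ≤ ‖x + y n‖ := by
      intro n
      have h2 : (2 : ℝ) = ‖(x + y n) - (x - y n)‖ := by
        have : (x + y n) - (x - y n) = (2 : ℝ) • y n := by
          rw [two_smul]; abel
        rw [this, norm_smul, hy1 n]; norm_num
      have := hub n
      linarith [h2 ▸ norm_sub_le (x + y n) (x - y n)]
    exact ⟨tendsto_of_tendsto_of_tendsto_of_le_of_le hlim' hlim hlb' hub',
      tendsto_of_tendsto_of_tendsto_of_le_of_le hlim' hlim hlb hub⟩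
end

section
/- If a Banach space X contains a complemented closed subspace isometric to c_0, then X admits an equivalent norm under which X is ASQ; namely, if P is a bounded projection onto a copy of c_0 (with the sup norm), then the norm |||x||| = max(‖P(x)‖, ‖x − P(x)‖) is equivalent to the original norm and (X, |||·|||) is ASQ. -/
open scoped ZeroAtInfty
open Filter

noncomputable def myDelta (n : ℕ) : C₀(ℕ, ℝ) :=
  ⟨⟨Pi.single n (1:ℝ), continuous_of_discreteTopology⟩, by
    rw [cocompact_eq_atTop]
    refine tendsto_atTop_of_eventually_const (i₀ := n + 1) fun m hm => ?_
    exact Pi.single_eq_of_ne (by omega) 1⟩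

theorem myDelta_apply (n m : ℕ) : myDelta n m = (Pi.single n 1 : ℕ → ℝ) m := rfl

theorem norm_myDelta (n : ℕ) : ‖myDelta n‖ = 1 := by
  rw [← ZeroAtInftyContinuousMap.norm_toBCF_eq_norm]
  apply le_antisymm
  · refine (BoundedContinuousFunction.norm_le zero_le_one).2 fun m => ?_
    show ‖myDelta n m‖ ≤ 1
    rw [myDelta_apply, Pi.single_apply]
    split <;> simp
  · have := BoundedContinuousFunction.norm_coe_le_norm (myDelta n).toBCF n
    simpa [myDelta_apply] using this

theorem norm_add_myDelta {f : C₀(ℕ, ℝ)} {n : ℕ} {ε : ℝ} (hε : 0 ≤ ε) (hf : ‖f‖ ≤ 1)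
    (hn : |f n| ≤ ε) (c : ℝ) (hc : |c| = 1) : ‖f + c • myDelta n‖ ≤ 1 + ε := by
  rw [← ZeroAtInftyContinuousMap.norm_toBCF_eq_norm]
  refine (BoundedContinuousFunction.norm_le (by linarith)).2 fun m => ?_
  show ‖f m + c * myDelta n m‖ ≤ 1 + ε
  rw [myDelta_apply, Pi.single_apply]
  by_cases h : m = n
  · simp only [if_pos h, mul_one]
    calc ‖f m + c‖ ≤ |f m| + |c| := norm_add_le _ _
    _ ≤ ε + 1 := by subst h; rw [hc]; linarith
    _ = 1 + ε := by ring
  · simp only [if_neg h, mul_zero, add_zero]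
    have : ‖f m‖ ≤ ‖f‖ := by
      rw [← ZeroAtInftyContinuousMap.norm_toBCF_eq_norm]
      exact BoundedContinuousFunction.norm_coe_le_norm f.toBCF m
    linarith

theorem stmt_9 (X : Type*) [NormedAddCommGroup X] [NormedSpace ℝ X] [CompleteSpace X]
    (P : X →L[ℝ] X) (hP : ∀ x, P (P x) = P x)
    (e : C₀(ℕ, ℝ) ≃ₗᵢ[ℝ] LinearMap.range (P : X →ₗ[ℝ] X)) :
    -- the new norm `|||x||| = max ‖P x‖ ‖x - P x‖` is equivalent to the original norm
    (∃ c > (0 : ℝ), ∀ x : X, c * ‖x‖ ≤ max ‖P x‖ ‖x - P x‖) ∧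
    (∃ C > (0 : ℝ), ∀ x : X, max ‖P x‖ ‖x - P x‖ ≤ C * ‖x‖) ∧
    -- and `X` with the new norm is ASQ
    (∀ S : Finset X, (∀ x ∈ S, max ‖P x‖ ‖x - P x‖ = 1) → ∀ ε : ℝ, 0 < ε →
      ∃ y : X, max ‖P y‖ ‖y - P y‖ = 1 ∧
        ∀ x ∈ S, max ‖P (x + y)‖ ‖(x + y) - P (x + y)‖ ≤ 1 + ε ∧
          max ‖P (x - y)‖ ‖(x - y) - P (x - y)‖ ≤ 1 + ε) := by
  refine ⟨⟨1/2, by norm_num, fun x => ?_⟩, ⟨‖P‖ + 1, by positivity, fun x => ?_⟩, ?_⟩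
  · have h1 : ‖x‖ ≤ ‖P x‖ + ‖x - P x‖ := by
      calc ‖x‖ = ‖P x + (x - P x)‖ := by congr 1; abel
      _ ≤ ‖P x‖ + ‖x - P x‖ := norm_add_le _ _
    have := le_max_left ‖P x‖ ‖x - P x‖
    have := le_max_right ‖P x‖ ‖x - P x‖
    linarith
  · have h1 : ‖P x‖ ≤ ‖P‖ * ‖x‖ := P.le_opNorm x
    have h2 : ‖x - P x‖ ≤ ‖x‖ + ‖P x‖ := norm_sub_le _ _
    have h3 : (0:ℝ) ≤ ‖x‖ := norm_nonneg x
    refine max_le (by nlinarith) (by nlinarith)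
  · intro S hS ε hε
    -- choose n large
    set g : X → C₀(ℕ, ℝ) := fun x => e.symm ⟨P x, ⟨x, rfl⟩⟩ with hg
    have hgx : ∀ x : X, ((e (g x) : LinearMap.range (P : X →ₗ[ℝ] X)) : X) = P x := by
      intro x; rw [hg]; simp
    have hev : ∀ᶠ n in cocompact ℕ, ∀ x ∈ S, |g x n| < ε := by
      rw [eventually_all_finset]
      intro x hx
      have := (g x).zero_at_infty'
      have h2 := this.eventually (Metric.ball_mem_nhds (0:ℝ) hε)
      filter_upwards [h2] with n hn
      simpa [Real.dist_eq] using hn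
    obtain ⟨n, hn⟩ := hev.exists
    -- the element y
    set y : X := ((e (myDelta n) : LinearMap.range (P : X →ₗ[ℝ] X)) : X) with hy
    have hyR : y ∈ LinearMap.range (P : X →ₗ[ℝ] X) := (e (myDelta n)).2
    have hPfix : ∀ z ∈ LinearMap.range (P : X →ₗ[ℝ] X), P z = z := by
      rintro z ⟨w, rfl⟩; exact hP w
    have hPy : P y = y := hPfix y hyR
    have hny : ‖y‖ = 1 := by
      rw [hy]
      have := e.norm_map (myDelta n)
      rw [norm_myDelta] at this
      exact this
    refine ⟨y, by rw [hPy, hny]; simp, fun x hx => ?_⟩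
    have hx1 := hS x hx
    have hPx : ‖P x‖ ≤ 1 := (le_max_left ‖P x‖ ‖x - P x‖).trans hx1.le
    have hxPx : ‖x - P x‖ ≤ 1 := (le_max_right ‖P x‖ ‖x - P x‖).trans hx1.le
    have hgnorm : ‖g x‖ ≤ 1 := by
      have := e.symm.norm_map (⟨P x, ⟨x, rfl⟩⟩ : LinearMap.range (P : X →ₗ[ℝ] X))
      rw [hg]
      simp only
      rw [this]
      simpa using hPx
    have key : ∀ c : ℝ, |c| = 1 → ‖P x + c • y‖ ≤ 1 + ε := by
      intro c hc
      have : P x + c • y = ((e (g x + c • myDelta n) : LinearMap.range (P : X →ₗ[ℝ] X)) : X) := by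
        rw [map_add, map_smul, Submodule.coe_add, Submodule.coe_smul, hgx, hy]
      rw [this]
      have hnorm : ‖(e (g x + c • myDelta n) : LinearMap.range (P : X →ₗ[ℝ] X))‖
          = ‖g x + c • myDelta n‖ := e.norm_map _
      rw [show ‖((e (g x + c • myDelta n) : LinearMap.range (P : X →ₗ[ℝ] X)) : X)‖
          = ‖(e (g x + c • myDelta n) : LinearMap.range (P : X →ₗ[ℝ] X))‖ from rfl, hnorm]
      exact norm_add_myDelta hε.le hgnorm (hn x hx).le c hc
    have hPxy : P (x + y) = P x + y := by rw [map_add, hPy]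
    have hPxy' : P (x - y) = P x - y := by rw [map_sub, hPy]
    constructor
    · refine max_le ?_ ?_
      · rw [hPxy]
        have := key 1 (by norm_num)
        simpa using this
      · rw [hPxy]
        have : x + y - (P x + y) = x - P x := by abel
        rw [this]; linarith
    · refine max_le ?_ ?_
      · rw [hPxy']
        have := key (-1) (by norm_num)
        simp only [neg_one_smul] at this
        rw [sub_eq_add_neg]; simpa using this
      · rw [hPxy']
        have : x - y - (P x - y) = x - P x := by abel
        rw [this]; linarith
end

section
/- Let X and Y be nontrivial Banach spaces and 1 ≤ p < ∞. Then X ⊕_p Y is LASQ if and only if both X and Y are LASQ. -/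
open scoped ENNReal

/-- A Banach space is locally almost square (LASQ). -/
def IsLASQ (Z : Type*) [NormedAddCommGroup Z] [NormedSpace ℝ Z] : Prop :=
  ∀ z : Z, ‖z‖ = 1 → ∀ ε : ℝ, 0 < ε →
    ∃ w : Z, ‖w‖ = 1 ∧ ‖z + w‖ ≤ 1 + ε ∧ ‖z - w‖ ≤ 1 + ε

section Aux

variable {X Y : Type*} [NormedAddCommGroup X] [NormedSpace ℝ X]
  [NormedAddCommGroup Y] [NormedSpace ℝ Y]

private lemma rpow_eq_one_cancel {a q : ℝ} (ha : 0 ≤ a) (hq : 0 < q) (h : a ^ q = 1) :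
    a = 1 := by
  have := Real.rpow_rpow_inv ha hq.ne'
  rw [← this, h, Real.one_rpow]

private lemma rpow_le_cancel {a b q : ℝ} (ha : 0 ≤ a) (hb : 0 ≤ b) (hq : 0 < q)
    (h : a ^ q ≤ b ^ q) : a ≤ b :=
  (Real.rpow_le_rpow_iff ha hb hq).mp h

private lemma lasq_norm_pow {p : ℝ≥0∞} [Fact (1 ≤ p)] (hp : p ≠ ∞)
    (z : WithLp p (X × Y)) :
    ‖z‖ ^ p.toReal = ‖z.fst‖ ^ p.toReal + ‖z.snd‖ ^ p.toReal := by
  have hp0 : p ≠ 0 := by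
    have h1 : (1 : ℝ≥0∞) ≤ p := Fact.out
    intro h; rw [h] at h1; simp at h1
  have hq : 0 < p.toReal := ENNReal.toReal_pos hp0 hp
  rw [WithLp.prod_norm_eq_add hq, one_div, Real.rpow_inv_rpow (by positivity) hq.ne']

private lemma toReal_one_le {p : ℝ≥0∞} [Fact (1 ≤ p)] (hp : p ≠ ∞) : 1 ≤ p.toReal := by
  have h1 : (1 : ℝ≥0∞) ≤ p := Fact.out
  simpa using ENNReal.toReal_mono hp h1

/-- From LASQ of the sum, extract a good `δ`. -/
private lemma good_delta {q ε : ℝ} (hq : 0 ≤ q) (hε : 0 < ε) :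
    ∃ δ : ℝ, 0 < δ ∧ δ ≤ ε / 2 ∧ (1 + δ) ^ q ≤ 1 + min (ε / 2) 2⁻¹ := by
  set η := min (ε / 2) 2⁻¹ with hη
  have hη0 : 0 < η := lt_min (by linarith) (by norm_num)
  have hcont : ContinuousAt (fun t : ℝ => (1 + t) ^ q) 0 := by
    have h1 : ContinuousAt (fun s : ℝ => s ^ q) ((1 : ℝ) + 0) :=
      Real.continuousAt_rpow_const _ _ (Or.inr hq)
    exact h1.comp (continuousAt_const.add continuousAt_id)
  have hlim : Filter.Tendsto (fun t : ℝ => (1 + t) ^ q) (nhds 0) (nhds 1) := by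
    have : ((1 : ℝ) + 0) ^ q = 1 := by rw [add_zero, Real.one_rpow]
    simpa [this] using hcont.tendsto
  have hev : ∀ᶠ t in nhds (0 : ℝ), (1 + t) ^ q < 1 + η :=
    hlim.eventually (Filter.Tendsto.eventually_lt_const (by linarith) Filter.tendsto_id)
  obtain ⟨r, hr0, hr⟩ := Metric.eventually_nhds_iff.mp hev
  refine ⟨min (r / 2) (ε / 2), lt_min (by linarith) (by linarith), min_le_right _ _, ?_⟩
  refine le_of_lt (hr ?_)
  rw [Real.dist_eq, sub_zero, abs_of_pos (lt_min (by linarith) (by linarith))]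
  calc min (r / 2) (ε / 2) ≤ r / 2 := min_le_left _ _
    _ < r := by linarith

private lemma lasq_fst {p : ℝ≥0∞} [Fact (1 ≤ p)] (hp : p ≠ ∞)
    (h : IsLASQ (WithLp p (X × Y))) : IsLASQ X := by
  intro x hx ε hε
  set q := p.toReal with hqdef
  have hq1 : 1 ≤ q := toReal_one_le hp
  have hq0 : 0 < q := lt_of_lt_of_le one_pos hq1
  obtain ⟨δ, hδ0, hδε, hδq⟩ := good_delta (q := q) hq0.le hε
  set η := min (ε / 2) (2 : ℝ)⁻¹ with hηdef
  have hηε : η ≤ ε / 2 := min_le_left _ _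
  have hη2 : η ≤ 2⁻¹ := min_le_right _ _
  set z : WithLp p (X × Y) := (WithLp.equiv p (X × Y)).symm (x, 0) with hzdef
  have hz : ‖z‖ = 1 := by rw [hzdef]; exact (WithLp.norm_toLp_fst p X Y x).trans hx
  obtain ⟨w, hw, hzw1, hzw2⟩ := h z hz δ hδ0
  set u := w.fst with hudef
  set v := w.snd with hvdef
  have hzfst : z.fst = x := rfl
  have hzsnd : z.snd = 0 := rfl
  have A1 : ‖u‖ ^ q + ‖v‖ ^ q = 1 := by
    have := lasq_norm_pow hp w
    rw [hw, Real.one_rpow] at this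
    linarith [this]
  have A2 : ‖x + u‖ ^ q + ‖v‖ ^ q ≤ (1 + δ) ^ q := by
    have h1 := lasq_norm_pow hp (z + w)
    have h2 : (z + w).fst = x + u := by rw [WithLp.add_fst, hzfst]
    have h3 : (z + w).snd = v := by rw [WithLp.add_snd, hzsnd, zero_add]
    rw [h2, h3] at h1
    calc ‖x + u‖ ^ q + ‖v‖ ^ q = ‖z + w‖ ^ q := h1.symm
      _ ≤ (1 + δ) ^ q := Real.rpow_le_rpow (norm_nonneg _) hzw1 hq0.le
  have A3 : ‖x - u‖ ^ q + ‖v‖ ^ q ≤ (1 + δ) ^ q := by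
    have h1 := lasq_norm_pow hp (z - w)
    have h2 : (z - w).fst = x - u := by rw [WithLp.sub_fst, hzfst]
    have h3 : (z - w).snd = -v := by rw [WithLp.sub_snd, hzsnd, zero_sub]
    rw [h2, h3, norm_neg] at h1
    calc ‖x - u‖ ^ q + ‖v‖ ^ q = ‖z - w‖ ^ q := h1.symm
      _ ≤ (1 + δ) ^ q := Real.rpow_le_rpow (norm_nonneg _) hzw2 hq0.le
  have hmax : 1 ≤ ‖x + u‖ ∨ 1 ≤ ‖x - u‖ := by
    by_contra hcon
    push_neg at hcon
    have h2 : ‖(x + u) + (x - u)‖ ≤ ‖x + u‖ + ‖x - u‖ := norm_add_le _ _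
    have h3 : (x + u) + (x - u) = (2 : ℝ) • x := by
      rw [two_smul]; abel
    rw [h3, norm_smul] at h2
    simp only [hx, mul_one] at h2
    have h4 : ‖(2 : ℝ)‖ = 2 := by norm_num
    rw [h4] at h2
    linarith [hcon.1, hcon.2]
  have hv : ‖v‖ ^ q ≤ (1 + δ) ^ q - 1 := by
    rcases hmax with h1 | h1
    · have := Real.one_le_rpow h1 hq0.le
      linarith
    · have := Real.one_le_rpow h1 hq0.le
      linarith
  have hu2 : 1 - η ≤ ‖u‖ ^ q := by
    have : (1 + δ) ^ q ≤ 1 + η := hδq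
    linarith
  have huq1 : ‖u‖ ^ q ≤ 1 := by
    have : 0 ≤ ‖v‖ ^ q := Real.rpow_nonneg (norm_nonneg _) _
    linarith
  have hu0 : u ≠ 0 := by
    intro hu
    rw [hu, norm_zero, Real.zero_rpow hq0.ne'] at hu2
    have : η ≤ 2⁻¹ := hη2
    linarith
  have hupos : 0 < ‖u‖ := norm_pos_iff.mpr hu0
  have hu1 : ‖u‖ ≤ 1 := by
    have := rpow_le_cancel (norm_nonneg u) zero_le_one hq0
      (by rw [Real.one_rpow]; exact huq1)
    exact this
  have hub : 1 - η ≤ ‖u‖ := by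
    have h1 : ‖u‖ ^ q ≤ ‖u‖ ^ (1 : ℝ) := Real.rpow_le_rpow_of_exponent_ge hupos hu1 hq1
    rw [Real.rpow_one] at h1
    linarith
  have hxu1 : ‖x + u‖ ≤ 1 + δ := by
    refine rpow_le_cancel (norm_nonneg _) (by linarith) hq0 ?_
    have : 0 ≤ ‖v‖ ^ q := Real.rpow_nonneg (norm_nonneg _) _
    linarith
  have hxu2 : ‖x - u‖ ≤ 1 + δ := by
    refine rpow_le_cancel (norm_nonneg _) (by linarith) hq0 ?_
    have : 0 ≤ ‖v‖ ^ q := Real.rpow_nonneg (norm_nonneg _) _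
    linarith
  refine ⟨‖u‖⁻¹ • u, ?_, ?_, ?_⟩
  · rw [norm_smul, norm_inv, norm_norm, inv_mul_cancel₀ hupos.ne']
  · have hdiff : ‖(‖u‖⁻¹ • u) - u‖ = 1 - ‖u‖ := by
      have h1 : (‖u‖⁻¹ • u) - u = (‖u‖⁻¹ - 1) • u := by
        rw [sub_smul, one_smul]
      rw [h1, norm_smul, Real.norm_eq_abs]
      have h2 : 1 ≤ ‖u‖⁻¹ := (one_le_inv₀ hupos).mpr hu1
      rw [abs_of_nonneg (by linarith), sub_mul, inv_mul_cancel₀ hupos.ne', one_mul]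
    calc ‖x + ‖u‖⁻¹ • u‖ = ‖(x + u) + ((‖u‖⁻¹ • u) - u)‖ := by congr 1; abel
      _ ≤ ‖x + u‖ + ‖(‖u‖⁻¹ • u) - u‖ := norm_add_le _ _
      _ = ‖x + u‖ + (1 - ‖u‖) := by rw [hdiff]
      _ ≤ (1 + δ) + η := by linarith
      _ ≤ 1 + ε := by linarith
  · have hdiff : ‖u - (‖u‖⁻¹ • u)‖ = 1 - ‖u‖ := by
      have h1 : u - (‖u‖⁻¹ • u) = (1 - ‖u‖⁻¹) • u := by
        rw [sub_smul, one_smul]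
      rw [h1, norm_smul, Real.norm_eq_abs]
      have h2 : 1 ≤ ‖u‖⁻¹ := (one_le_inv₀ hupos).mpr hu1
      rw [abs_of_nonpos (by linarith), neg_sub, sub_mul, inv_mul_cancel₀ hupos.ne', one_mul]
    calc ‖x - ‖u‖⁻¹ • u‖ = ‖(x - u) + (u - (‖u‖⁻¹ • u))‖ := by congr 1; abel
      _ ≤ ‖x - u‖ + ‖u - (‖u‖⁻¹ • u)‖ := norm_add_le _ _
      _ = ‖x - u‖ + (1 - ‖u‖) := by rw [hdiff]
      _ ≤ (1 + δ) + η := by linarith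
      _ ≤ 1 + ε := by linarith

private lemma lasq_snd {p : ℝ≥0∞} [Fact (1 ≤ p)] (hp : p ≠ ∞)
    (h : IsLASQ (WithLp p (X × Y))) : IsLASQ Y := by
  intro y hy ε hε
  set q := p.toReal with hqdef
  have hq1 : 1 ≤ q := toReal_one_le hp
  have hq0 : 0 < q := lt_of_lt_of_le one_pos hq1
  obtain ⟨δ, hδ0, hδε, hδq⟩ := good_delta (q := q) hq0.le hε
  set η := min (ε / 2) (2 : ℝ)⁻¹ with hηdef
  have hηε : η ≤ ε / 2 := min_le_left _ _
  have hη2 : η ≤ 2⁻¹ := min_le_right _ _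
  set z : WithLp p (X × Y) := (WithLp.equiv p (X × Y)).symm (0, y) with hzdef
  have hz : ‖z‖ = 1 := by rw [hzdef]; exact (WithLp.norm_toLp_snd p X Y y).trans hy
  obtain ⟨w, hw, hzw1, hzw2⟩ := h z hz δ hδ0
  set u := w.fst with hudef
  set v := w.snd with hvdef
  have hzfst : z.fst = 0 := rfl
  have hzsnd : z.snd = y := rfl
  have A1 : ‖u‖ ^ q + ‖v‖ ^ q = 1 := by
    have := lasq_norm_pow hp w
    rw [hw, Real.one_rpow] at this
    linarith [this]
  have A2 : ‖y + v‖ ^ q + ‖u‖ ^ q ≤ (1 + δ) ^ q := by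
    have h1 := lasq_norm_pow hp (z + w)
    have h2 : (z + w).fst = u := by rw [WithLp.add_fst, hzfst, zero_add]
    have h3 : (z + w).snd = y + v := by rw [WithLp.add_snd, hzsnd]
    rw [h2, h3] at h1
    calc ‖y + v‖ ^ q + ‖u‖ ^ q = ‖z + w‖ ^ q := by rw [h1]; ring
      _ ≤ (1 + δ) ^ q := Real.rpow_le_rpow (norm_nonneg _) hzw1 hq0.le
  have A3 : ‖y - v‖ ^ q + ‖u‖ ^ q ≤ (1 + δ) ^ q := by
    have h1 := lasq_norm_pow hp (z - w)
    have h2 : (z - w).fst = -u := by rw [WithLp.sub_fst, hzfst, zero_sub]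
    have h3 : (z - w).snd = y - v := by rw [WithLp.sub_snd, hzsnd]
    rw [h2, h3, norm_neg] at h1
    calc ‖y - v‖ ^ q + ‖u‖ ^ q = ‖z - w‖ ^ q := by rw [h1]; ring
      _ ≤ (1 + δ) ^ q := Real.rpow_le_rpow (norm_nonneg _) hzw2 hq0.le
  have hmax : 1 ≤ ‖y + v‖ ∨ 1 ≤ ‖y - v‖ := by
    by_contra hcon
    push_neg at hcon
    have h2 : ‖(y + v) + (y - v)‖ ≤ ‖y + v‖ + ‖y - v‖ := norm_add_le _ _
    have h3 : (y + v) + (y - v) = (2 : ℝ) • y := by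
      rw [two_smul]; abel
    rw [h3, norm_smul] at h2
    simp only [hy, mul_one] at h2
    have h4 : ‖(2 : ℝ)‖ = 2 := by norm_num
    rw [h4] at h2
    linarith [hcon.1, hcon.2]
  have hu : ‖u‖ ^ q ≤ (1 + δ) ^ q - 1 := by
    rcases hmax with h1 | h1
    · have := Real.one_le_rpow h1 hq0.le
      linarith
    · have := Real.one_le_rpow h1 hq0.le
      linarith
  have hv2 : 1 - η ≤ ‖v‖ ^ q := by
    have : (1 + δ) ^ q ≤ 1 + η := hδq
    linarith
  have hvq1 : ‖v‖ ^ q ≤ 1 := by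
    have : 0 ≤ ‖u‖ ^ q := Real.rpow_nonneg (norm_nonneg _) _
    linarith
  have hv0 : v ≠ 0 := by
    intro hveq
    rw [hveq, norm_zero, Real.zero_rpow hq0.ne'] at hv2
    linarith
  have hvpos : 0 < ‖v‖ := norm_pos_iff.mpr hv0
  have hv1 : ‖v‖ ≤ 1 :=
    rpow_le_cancel (norm_nonneg v) zero_le_one hq0 (by rw [Real.one_rpow]; exact hvq1)
  have hvb : 1 - η ≤ ‖v‖ := by
    have h1 : ‖v‖ ^ q ≤ ‖v‖ ^ (1 : ℝ) := Real.rpow_le_rpow_of_exponent_ge hvpos hv1 hq1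
    rw [Real.rpow_one] at h1
    linarith
  have hyv1 : ‖y + v‖ ≤ 1 + δ := by
    refine rpow_le_cancel (norm_nonneg _) (by linarith) hq0 ?_
    have : 0 ≤ ‖u‖ ^ q := Real.rpow_nonneg (norm_nonneg _) _
    linarith
  have hyv2 : ‖y - v‖ ≤ 1 + δ := by
    refine rpow_le_cancel (norm_nonneg _) (by linarith) hq0 ?_
    have : 0 ≤ ‖u‖ ^ q := Real.rpow_nonneg (norm_nonneg _) _
    linarith
  refine ⟨‖v‖⁻¹ • v, ?_, ?_, ?_⟩
  · rw [norm_smul, norm_inv, norm_norm, inv_mul_cancel₀ hvpos.ne']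
  · have hdiff : ‖(‖v‖⁻¹ • v) - v‖ = 1 - ‖v‖ := by
      have h1 : (‖v‖⁻¹ • v) - v = (‖v‖⁻¹ - 1) • v := by
        rw [sub_smul, one_smul]
      rw [h1, norm_smul, Real.norm_eq_abs]
      have h2 : 1 ≤ ‖v‖⁻¹ := (one_le_inv₀ hvpos).mpr hv1
      rw [abs_of_nonneg (by linarith), sub_mul, inv_mul_cancel₀ hvpos.ne', one_mul]
    calc ‖y + ‖v‖⁻¹ • v‖ = ‖(y + v) + ((‖v‖⁻¹ • v) - v)‖ := by congr 1; abel
      _ ≤ ‖y + v‖ + ‖(‖v‖⁻¹ • v) - v‖ := norm_add_le _ _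
      _ = ‖y + v‖ + (1 - ‖v‖) := by rw [hdiff]
      _ ≤ (1 + δ) + η := by linarith
      _ ≤ 1 + ε := by linarith
  · have hdiff : ‖v - (‖v‖⁻¹ • v)‖ = 1 - ‖v‖ := by
      have h1 : v - (‖v‖⁻¹ • v) = (1 - ‖v‖⁻¹) • v := by
        rw [sub_smul, one_smul]
      rw [h1, norm_smul, Real.norm_eq_abs]
      have h2 : 1 ≤ ‖v‖⁻¹ := (one_le_inv₀ hvpos).mpr hv1
      rw [abs_of_nonpos (by linarith), neg_sub, sub_mul, inv_mul_cancel₀ hvpos.ne', one_mul]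
    calc ‖y - ‖v‖⁻¹ • v‖ = ‖(y - v) + (v - (‖v‖⁻¹ • v))‖ := by congr 1; abel
      _ ≤ ‖y - v‖ + ‖v - (‖v‖⁻¹ • v)‖ := norm_add_le _ _
      _ = ‖y - v‖ + (1 - ‖v‖) := by rw [hdiff]
      _ ≤ (1 + δ) + η := by linarith
      _ ≤ 1 + ε := by linarith

private lemma lasq_combine {p : ℝ≥0∞} [Fact (1 ≤ p)] (hp : p ≠ ∞)
    (hX : IsLASQ X) (hY : IsLASQ Y) : IsLASQ (WithLp p (X × Y)) := by
  intro z hz ε hε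
  set q := p.toReal with hqdef
  have hq1 : 1 ≤ q := toReal_one_le hp
  have hq0 : 0 < q := lt_of_lt_of_le one_pos hq1
  have hsum : ‖z.fst‖ ^ q + ‖z.snd‖ ^ q = 1 := by
    have := lasq_norm_pow hp z
    rw [hz, Real.one_rpow] at this
    linarith [this]
  have hε1 : (0 : ℝ) ≤ 1 + ε := by linarith
  by_cases hzf : z.fst = 0
  · -- first component zero: use Y
    have hzs : ‖z.snd‖ = 1 := by
      apply rpow_eq_one_cancel (norm_nonneg _) hq0
      rw [hzf, norm_zero, Real.zero_rpow hq0.ne'] at hsum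
      linarith
    obtain ⟨v, hv, hv1, hv2⟩ := hY z.snd hzs ε hε
    refine ⟨(WithLp.equiv p (X × Y)).symm (0, v), ?_, ?_, ?_⟩
    · exact (WithLp.norm_toLp_snd p X Y v).trans hv
    · set w : WithLp p (X × Y) := (WithLp.equiv p (X × Y)).symm (0, v) with hwdef
      have h1 := lasq_norm_pow hp (z + w)
      have h2 : (z + w).fst = 0 := by
        rw [WithLp.add_fst, hzf]; simp [hwdef]
      have h3 : (z + w).snd = z.snd + v := by rw [WithLp.add_snd]; rfl
      rw [h2, h3, norm_zero, Real.zero_rpow hq0.ne', zero_add] at h1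
      refine rpow_le_cancel (norm_nonneg _) hε1 hq0 ?_
      rw [h1]
      exact Real.rpow_le_rpow (norm_nonneg _) hv1 hq0.le
    · set w : WithLp p (X × Y) := (WithLp.equiv p (X × Y)).symm (0, v) with hwdef
      have h1 := lasq_norm_pow hp (z - w)
      have h2 : (z - w).fst = 0 := by
        rw [WithLp.sub_fst, hzf]; simp [hwdef]
      have h3 : (z - w).snd = z.snd - v := by rw [WithLp.sub_snd]; rfl
      rw [h2, h3, norm_zero, Real.zero_rpow hq0.ne', zero_add] at h1
      refine rpow_le_cancel (norm_nonneg _) hε1 hq0 ?_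
      rw [h1]
      exact Real.rpow_le_rpow (norm_nonneg _) hv2 hq0.le
  · by_cases hzs : z.snd = 0
    · -- second component zero: use X
      have hzf1 : ‖z.fst‖ = 1 := by
        apply rpow_eq_one_cancel (norm_nonneg _) hq0
        rw [hzs, norm_zero, Real.zero_rpow hq0.ne'] at hsum
        linarith
      obtain ⟨u, hu, hu1, hu2⟩ := hX z.fst hzf1 ε hε
      refine ⟨(WithLp.equiv p (X × Y)).symm (u, 0), ?_, ?_, ?_⟩
      · exact (WithLp.norm_toLp_fst p X Y u).trans hu
      · set w : WithLp p (X × Y) := (WithLp.equiv p (X × Y)).symm (u, 0) with hwdef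
        have h1 := lasq_norm_pow hp (z + w)
        have h2 : (z + w).snd = 0 := by
          rw [WithLp.add_snd, hzs]; simp [hwdef]
        have h3 : (z + w).fst = z.fst + u := by rw [WithLp.add_fst]; rfl
        rw [h2, h3, norm_zero, Real.zero_rpow hq0.ne', add_zero] at h1
        refine rpow_le_cancel (norm_nonneg _) hε1 hq0 ?_
        rw [h1]
        exact Real.rpow_le_rpow (norm_nonneg _) hu1 hq0.le
      · set w : WithLp p (X × Y) := (WithLp.equiv p (X × Y)).symm (u, 0) with hwdef
        have h1 := lasq_norm_pow hp (z - w)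
        have h2 : (z - w).snd = 0 := by
          rw [WithLp.sub_snd, hzs]; simp [hwdef]
        have h3 : (z - w).fst = z.fst - u := by rw [WithLp.sub_fst]; rfl
        rw [h2, h3, norm_zero, Real.zero_rpow hq0.ne', add_zero] at h1
        refine rpow_le_cancel (norm_nonneg _) hε1 hq0 ?_
        rw [h1]
        exact Real.rpow_le_rpow (norm_nonneg _) hu2 hq0.le
    · -- both components nonzero
      set a := ‖z.fst‖ with hadef
      set b := ‖z.snd‖ with hbdef
      have ha : 0 < a := norm_pos_iff.mpr hzf
      have hb : 0 < b := norm_pos_iff.mpr hzs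
      obtain ⟨u, hu, hu1, hu2⟩ := hX (a⁻¹ • z.fst)
        (by rw [norm_smul, norm_inv, Real.norm_eq_abs, abs_of_pos ha,
              inv_mul_cancel₀ ha.ne']) ε hε
      obtain ⟨v, hv, hv1, hv2⟩ := hY (b⁻¹ • z.snd)
        (by rw [norm_smul, norm_inv, Real.norm_eq_abs, abs_of_pos hb,
              inv_mul_cancel₀ hb.ne']) ε hε
      set w : WithLp p (X × Y) := (WithLp.equiv p (X × Y)).symm (a • u, b • v) with hwdef
      have hwfst : w.fst = a • u := rfl
      have hwsnd : w.snd = b • v := rfl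
      have hnormau : ‖a • u‖ = a := by
        rw [norm_smul, Real.norm_eq_abs, abs_of_pos ha, hu, mul_one]
      have hnormbv : ‖b • v‖ = b := by
        rw [norm_smul, Real.norm_eq_abs, abs_of_pos hb, hv, mul_one]
      have hzfa : z.fst = a • (a⁻¹ • z.fst) := (smul_inv_smul₀ ha.ne' _).symm
      have hzsb : z.snd = b • (b⁻¹ • z.snd) := (smul_inv_smul₀ hb.ne' _).symm
      refine ⟨w, ?_, ?_, ?_⟩
      · apply rpow_eq_one_cancel (norm_nonneg _) hq0
        rw [lasq_norm_pow hp w, hwfst, hwsnd, hnormau, hnormbv]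
        exact hsum
      · -- ‖z + w‖ ≤ 1 + ε
        refine rpow_le_cancel (norm_nonneg _) hε1 hq0 ?_
        rw [lasq_norm_pow hp (z + w), WithLp.add_fst, WithLp.add_snd, hwfst, hwsnd]
        have e1 : z.fst + a • u = a • (a⁻¹ • z.fst + u) := by
          rw [smul_add]; rw [← hzfa]
        have e2 : z.snd + b • v = b • (b⁻¹ • z.snd + v) := by
          rw [smul_add]; rw [← hzsb]
        rw [e1, e2, norm_smul, norm_smul, Real.norm_eq_abs, Real.norm_eq_abs,
          abs_of_pos ha, abs_of_pos hb]
        have f1 : (a * ‖a⁻¹ • z.fst + u‖) ^ q ≤ a ^ q * (1 + ε) ^ q := by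
          rw [Real.mul_rpow ha.le (norm_nonneg _)]
          exact mul_le_mul_of_nonneg_left
            (Real.rpow_le_rpow (norm_nonneg _) hu1 hq0.le)
            (Real.rpow_nonneg ha.le _)
        have f2 : (b * ‖b⁻¹ • z.snd + v‖) ^ q ≤ b ^ q * (1 + ε) ^ q := by
          rw [Real.mul_rpow hb.le (norm_nonneg _)]
          exact mul_le_mul_of_nonneg_left
            (Real.rpow_le_rpow (norm_nonneg _) hv1 hq0.le)
            (Real.rpow_nonneg hb.le _)
        calc (a * ‖a⁻¹ • z.fst + u‖) ^ q + (b * ‖b⁻¹ • z.snd + v‖) ^ q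
            ≤ a ^ q * (1 + ε) ^ q + b ^ q * (1 + ε) ^ q := by linarith
          _ = (a ^ q + b ^ q) * (1 + ε) ^ q := by ring
          _ = (1 + ε) ^ q := by rw [hsum, one_mul]
      · -- ‖z - w‖ ≤ 1 + ε
        refine rpow_le_cancel (norm_nonneg _) hε1 hq0 ?_
        rw [lasq_norm_pow hp (z - w), WithLp.sub_fst, WithLp.sub_snd, hwfst, hwsnd]
        have e1 : z.fst - a • u = a • (a⁻¹ • z.fst - u) := by
          rw [smul_sub]; rw [← hzfa]
        have e2 : z.snd - b • v = b • (b⁻¹ • z.snd - v) := by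
          rw [smul_sub]; rw [← hzsb]
        rw [e1, e2, norm_smul, norm_smul, Real.norm_eq_abs, Real.norm_eq_abs,
          abs_of_pos ha, abs_of_pos hb]
        have f1 : (a * ‖a⁻¹ • z.fst - u‖) ^ q ≤ a ^ q * (1 + ε) ^ q := by
          rw [Real.mul_rpow ha.le (norm_nonneg _)]
          exact mul_le_mul_of_nonneg_left
            (Real.rpow_le_rpow (norm_nonneg _) hu2 hq0.le)
            (Real.rpow_nonneg ha.le _)
        have f2 : (b * ‖b⁻¹ • z.snd - v‖) ^ q ≤ b ^ q * (1 + ε) ^ q := by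
          rw [Real.mul_rpow hb.le (norm_nonneg _)]
          exact mul_le_mul_of_nonneg_left
            (Real.rpow_le_rpow (norm_nonneg _) hv2 hq0.le)
            (Real.rpow_nonneg hb.le _)
        calc (a * ‖a⁻¹ • z.fst - u‖) ^ q + (b * ‖b⁻¹ • z.snd - v‖) ^ q
            ≤ a ^ q * (1 + ε) ^ q + b ^ q * (1 + ε) ^ q := by linarith
          _ = (a ^ q + b ^ q) * (1 + ε) ^ q := by ring
          _ = (1 + ε) ^ q := by rw [hsum, one_mul]

end Aux

theorem stmt_16 (X Y : Type*) [NormedAddCommGroup X] [NormedSpace ℝ X] [CompleteSpace X]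
    [NormedAddCommGroup Y] [NormedSpace ℝ Y] [CompleteSpace Y]
    [Nontrivial X] [Nontrivial Y]
    (p : ℝ≥0∞) [Fact (1 ≤ p)] (hp : p ≠ ∞) :
    IsLASQ (WithLp p (X × Y)) ↔ IsLASQ X ∧ IsLASQ Y := by
  constructor
  · exact fun h => ⟨lasq_fst hp h, lasq_snd hp h⟩
  · exact fun ⟨hX, hY⟩ => lasq_combine hp hX hY
end
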